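/- Let (i_1,…,i_m) be a word in {1,…,n−1} which is not reduced, i.e. ℓ(s_{i_1}s_{i_2}⋯s_{i_m}) < m. Then the composite operator ∂_{i_1}∘∂_{i_2}∘⋯∘∂_{i_m} on ℤ[ε_1,…,ε_n] is the zero operator. In particular ∂_i∘∂_i = 0 for every i. -/

import Mathlib

open MvPolynomial

/-- The adjacent transposition swapping `i` and `i+1` (0-indexed). -/
def sT (n : ℕ) (i : ℕ) : Equiv.Perm (Fin n) :=
  if h : i + 1 < n then Equiv.swap ⟨i, Nat.lt_of_succ_lt h⟩ ⟨i + 1, h⟩ else 1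

/-- Product of a word in the simple transpositions. -/
def wordProd (n : ℕ) (l : List ℕ) : Equiv.Perm (Fin n) := (l.map (sT n)).prod

/-- Number of inversions = Coxeter length. -/
def invLen {n : ℕ} (w : Equiv.Perm (Fin n)) : ℕ :=
  (Finset.univ.filter fun p : Fin n × Fin n => p.1 < p.2 ∧ w p.2 < w p.1).card

open Classical in
/-- The divided difference operator. -/
noncomputable def dd (n : ℕ) (i : ℕ) (f : MvPolynomial (Fin n) ℤ) : MvPolynomial (Fin n) ℤ :=
  if h : i + 1 < n then
    if hd : ∃ g : MvPolynomial (Fin n) ℤ,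
        f - rename (⇑(sT n i)) f = (X ⟨i, Nat.lt_of_succ_lt h⟩ - X ⟨i + 1, h⟩) * g
    then hd.choose else 0
  else 0

open Classical in
noncomputable def ddList (n : ℕ) : List ℕ → MvPolynomial (Fin n) ℤ → MvPolynomial (Fin n) ℤ
  | [], f => f
  | i :: t, f => dd n i (ddList n t f)

def IsReducedWord (n : ℕ) (l : List ℕ) (w : Equiv.Perm (Fin n)) : Prop :=
  (∀ i ∈ l, i + 1 < n) ∧ wordProd n l = w ∧ l.length = invLen w

noncomputable def nest (n : ℕ) :
    List (List ℕ) → List (MvPolynomial (Fin n) ℤ) → MvPolynomial (Fin n) ℤ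
  | [], _ => 1
  | _ :: _, [] => 1
  | l :: ls, g :: gs => ddList n l (g * nest n ls gs)

noncomputable def xv (n j : ℕ) : MvPolynomial (Fin n) ℤ := if h : j < n then X ⟨j, h⟩ else 0

section DDAlgebra

variable {n i j : ℕ}

lemma sT_eq (h : i + 1 < n) :
    sT n i = Equiv.swap ⟨i, Nat.lt_of_succ_lt h⟩ ⟨i + 1, h⟩ := dif_pos h

lemma sT_apply_fst (h : i + 1 < n) : sT n i ⟨i, Nat.lt_of_succ_lt h⟩ = ⟨i + 1, h⟩ := by
  rw [sT_eq h]; exact Equiv.swap_apply_left _ _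

lemma sT_apply_snd (h : i + 1 < n) : sT n i ⟨i + 1, h⟩ = ⟨i, Nat.lt_of_succ_lt h⟩ := by
  rw [sT_eq h]; exact Equiv.swap_apply_right _ _

lemma sT_apply_other (h : i + 1 < n) (x : Fin n) (h1 : (x : ℕ) ≠ i) (h2 : (x : ℕ) ≠ i + 1) :
    sT n i x = x := by
  rw [sT_eq h]
  exact Equiv.swap_apply_of_ne_of_ne (Fin.ne_of_val_ne h1) (Fin.ne_of_val_ne h2)

lemma sT_sT_apply (x : Fin n) : sT n i (sT n i x) = x := by
  rw [sT]; split
  · exact Equiv.swap_apply_self _ _ _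
  · rfl

lemma sT_mul_self : sT n i * sT n i = 1 := by
  apply Equiv.ext; intro x
  simp [Equiv.Perm.mul_apply, sT_sT_apply]

lemma sT_comm_apply (hi : i + 1 < n) (hj : j + 1 < n) (hij : i + 1 < j) (x : Fin n) :
    sT n i (sT n j x) = sT n j (sT n i x) := by
  rcases eq_or_ne (x : ℕ) j with h1 | h1
  · have hx : x = ⟨j, Nat.lt_of_succ_lt hj⟩ := Fin.ext h1
    subst hx
    rw [sT_apply_fst hj, sT_apply_other hi _ (by simp; omega) (by simp; omega),
      sT_apply_other hi _ (by simp; omega) (by simp; omega), sT_apply_fst hj]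
  · rcases eq_or_ne (x : ℕ) (j + 1) with h2 | h2
    · have hx : x = ⟨j + 1, hj⟩ := Fin.ext h2
      subst hx
      rw [sT_apply_snd hj, sT_apply_other hi _ (by simp; omega) (by simp; omega),
        sT_apply_other hi _ (by simp; omega) (by simp; omega), sT_apply_snd hj]
    · rw [sT_apply_other hj x h1 h2]
      rcases eq_or_ne (x : ℕ) i with h3 | h3
      · have hx : x = ⟨i, Nat.lt_of_succ_lt hi⟩ := Fin.ext h3
        subst hx
        rw [sT_apply_fst hi, sT_apply_other hj _ (by simp; omega) (by simp; omega)]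
      · rcases eq_or_ne (x : ℕ) (i + 1) with h4 | h4
        · have hx : x = ⟨i + 1, hi⟩ := Fin.ext h4
          subst hx
          rw [sT_apply_snd hi, sT_apply_other hj _ (by simp; omega) (by simp; omega)]
        · rw [sT_apply_other hi x h3 h4, sT_apply_other hj x h1 h2]

lemma sT_comm (hi : i + 1 < n) (hj : j + 1 < n) (hij : i + 1 < j) :
    sT n i * sT n j = sT n j * sT n i := by
  apply Equiv.ext; intro x
  simp only [Equiv.Perm.mul_apply]
  exact sT_comm_apply hi hj hij x

lemma sT_braid (h : i + 2 < n) :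
    sT n i * sT n (i + 1) * sT n i = sT n (i + 1) * sT n i * sT n (i + 1) := by
  have hi : i + 1 < n := by omega
  have hj : i + 1 + 1 < n := by omega
  set e0 : Fin n := ⟨i, by omega⟩
  set e1 : Fin n := ⟨i + 1, hi⟩
  set e2 : Fin n := ⟨i + 2, by omega⟩
  have h01 : e0 ≠ e1 := by simp [e0, e1, Fin.ext_iff]
  have h02 : e0 ≠ e2 := by simp [e0, e2, Fin.ext_iff]
  have h12 : e1 ≠ e2 := by simp [e1, e2, Fin.ext_iff]
  have hs : sT n i = Equiv.swap e0 e1 := sT_eq hi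
  have ht : sT n (i + 1) = Equiv.swap e1 e2 := sT_eq hj
  have A := Equiv.swap_mul_swap_mul_swap (x := e2) (y := e1) (z := e0) h12.symm h02.symm
  have B := Equiv.swap_mul_swap_mul_swap (x := e0) (y := e1) (z := e2) h01 h02
  rw [hs, ht]
  rw [Equiv.swap_comm e1 e0, Equiv.swap_comm e2 e1] at A
  rw [Equiv.swap_comm e2 e0] at B
  rw [A, B]

lemma dvd_sub_rename_swap (a b : Fin n) (f : MvPolynomial (Fin n) ℤ) :
    (X a - X b : MvPolynomial (Fin n) ℤ) ∣ f - rename (⇑(Equiv.swap a b)) f := by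
  induction f using MvPolynomial.induction_on with
  | C c => simp
  | add p q hp hq =>
      have : (p + q) - rename (⇑(Equiv.swap a b)) (p + q)
          = (p - rename (⇑(Equiv.swap a b)) p) + (q - rename (⇑(Equiv.swap a b)) q) := by
        rw [map_add]; ring
      rw [this]; exact dvd_add hp hq
  | mul_X p j hp =>
      have key : p * X j - rename (⇑(Equiv.swap a b)) (p * X j)
          = (p - rename (⇑(Equiv.swap a b)) p) * X j
            + rename (⇑(Equiv.swap a b)) p * (X j - X (Equiv.swap a b j)) := by
        rw [map_mul, rename_X]; ring
      rw [key]
      refine dvd_add (Dvd.dvd.mul_right hp _) (Dvd.dvd.mul_left ?_ _)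
      rcases eq_or_ne j a with rfl | hja
      · rw [Equiv.swap_apply_left]
      · rcases eq_or_ne j b with rfl | hjb
        · rw [Equiv.swap_apply_right]; exact ⟨-1, by ring⟩
        · rw [Equiv.swap_apply_of_ne_of_ne hja hjb]; simp

lemma rename_sT_sT (f : MvPolynomial (Fin n) ℤ) :
    rename (⇑(sT n i)) (rename (⇑(sT n i)) f) = f := by
  rw [rename_rename, show (⇑(sT n i) ∘ ⇑(sT n i)) = id from funext fun x => sT_sT_apply x,
    rename_id, AlgHom.id_apply]

lemma X_sub_X_ne_gen {u v : Fin n} (huv : u ≠ v) :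
    (X u - X v : MvPolynomial (Fin n) ℤ) ≠ 0 :=
  sub_ne_zero.mpr fun he => huv (X_injective he)

lemma X_sub_X_ne (h : i + 1 < n) :
    (X ⟨i, Nat.lt_of_succ_lt h⟩ - X ⟨i + 1, h⟩ : MvPolynomial (Fin n) ℤ) ≠ 0 :=
  sub_ne_zero.mpr fun he => by
    have := X_injective.eq_iff.mp he
    simp [Fin.ext_iff] at this

lemma dd_spec (h : i + 1 < n) (f : MvPolynomial (Fin n) ℤ) :
    (X ⟨i, Nat.lt_of_succ_lt h⟩ - X ⟨i + 1, h⟩) * dd n i f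
      = f - rename (⇑(sT n i)) f := by
  have hex : ∃ g : MvPolynomial (Fin n) ℤ,
      f - rename (⇑(sT n i)) f = (X ⟨i, Nat.lt_of_succ_lt h⟩ - X ⟨i + 1, h⟩) * g := by
    obtain ⟨g, hg⟩ := dvd_sub_rename_swap (⟨i, Nat.lt_of_succ_lt h⟩ : Fin n) ⟨i + 1, h⟩ f
    exact ⟨g, by rw [← sT_eq h] at hg; exact hg⟩
  rw [dd, dif_pos h, dif_pos hex]
  exact hex.choose_spec.symm

lemma dd_unique (h : i + 1 < n) {f g : MvPolynomial (Fin n) ℤ}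
    (hg : (X ⟨i, Nat.lt_of_succ_lt h⟩ - X ⟨i + 1, h⟩) * g = f - rename (⇑(sT n i)) f) :
    dd n i f = g :=
  mul_left_cancel₀ (X_sub_X_ne h) ((dd_spec h f).trans hg.symm)

lemma dd_zero (h : i + 1 < n) : dd n i (0 : MvPolynomial (Fin n) ℤ) = 0 :=
  dd_unique h (by simp)

lemma rename_dd (h : i + 1 < n) (f : MvPolynomial (Fin n) ℤ) :
    rename (⇑(sT n i)) (dd n i f) = dd n i f := by
  have h1 := congrArg (rename (⇑(sT n i))) (dd_spec h f)
  rw [map_mul, map_sub, map_sub, rename_X, rename_X, rename_sT_sT,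
    sT_apply_fst h, sT_apply_snd h] at h1
  have h2 : (X ⟨i, Nat.lt_of_succ_lt h⟩ - X ⟨i + 1, h⟩ : MvPolynomial (Fin n) ℤ)
      * rename (⇑(sT n i)) (dd n i f) = f - rename (⇑(sT n i)) f := by
    linear_combination -h1
  exact mul_left_cancel₀ (X_sub_X_ne h) (h2.trans (dd_spec h f).symm)

lemma dd_of_invariant (h : i + 1 < n) {f : MvPolynomial (Fin n) ℤ}
    (hf : rename (⇑(sT n i)) f = f) : dd n i f = 0 :=
  dd_unique h (by rw [hf]; ring)

lemma dd_dd (h : i + 1 < n) (f : MvPolynomial (Fin n) ℤ) : dd n i (dd n i f) = 0 :=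
  dd_of_invariant h (rename_dd h f)

lemma rename_sT_comm (hi : i + 1 < n) (hj : j + 1 < n) (hij : i + 1 < j)
    (f : MvPolynomial (Fin n) ℤ) :
    rename (⇑(sT n i)) (rename (⇑(sT n j)) f)
      = rename (⇑(sT n j)) (rename (⇑(sT n i)) f) := by
  rw [rename_rename, rename_rename,
    show (⇑(sT n i) ∘ ⇑(sT n j)) = (⇑(sT n j) ∘ ⇑(sT n i)) from
      funext fun x => sT_comm_apply hi hj hij x]

lemma dd_comm (hi : i + 1 < n) (hj : j + 1 < n) (hij : i + 1 < j)
    (f : MvPolynomial (Fin n) ℤ) :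
    dd n i (dd n j f) = dd n j (dd n i f) := by
  have hia : (i : ℕ) ≠ j ∧ i ≠ j + 1 ∧ i + 1 ≠ j ∧ i + 1 ≠ j + 1 := by omega
  have hrsb : rename (⇑(sT n i)) (X ⟨j, Nat.lt_of_succ_lt hj⟩ - X ⟨j + 1, hj⟩
      : MvPolynomial (Fin n) ℤ) = X ⟨j, Nat.lt_of_succ_lt hj⟩ - X ⟨j + 1, hj⟩ := by
    rw [map_sub, rename_X, rename_X, sT_apply_other hi _ (by simp; omega) (by simp; omega),
      sT_apply_other hi _ (by simp; omega) (by simp; omega)]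
  have hrta : rename (⇑(sT n j)) (X ⟨i, Nat.lt_of_succ_lt hi⟩ - X ⟨i + 1, hi⟩
      : MvPolynomial (Fin n) ℤ) = X ⟨i, Nat.lt_of_succ_lt hi⟩ - X ⟨i + 1, hi⟩ := by
    rw [map_sub, rename_X, rename_X, sT_apply_other hj _ (by simp; omega) (by simp; omega),
      sT_apply_other hj _ (by simp; omega) (by simp; omega)]
  have e1 := dd_spec hi (dd n j f)
  have e2 := dd_spec hj f
  have e4 : (X ⟨j, Nat.lt_of_succ_lt hj⟩ - X ⟨j + 1, hj⟩ : MvPolynomial (Fin n) ℤ)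
      * rename (⇑(sT n i)) (dd n j f)
      = rename (⇑(sT n i)) f - rename (⇑(sT n i)) (rename (⇑(sT n j)) f) := by
    have h := congrArg (rename (⇑(sT n i))) e2
    rw [map_mul, hrsb, map_sub] at h
    exact h
  have e5 := dd_spec hi f
  have e6 := dd_spec hj (dd n i f)
  have e7 : (X ⟨i, Nat.lt_of_succ_lt hi⟩ - X ⟨i + 1, hi⟩ : MvPolynomial (Fin n) ℤ)
      * rename (⇑(sT n j)) (dd n i f)
      = rename (⇑(sT n j)) f - rename (⇑(sT n j)) (rename (⇑(sT n i)) f) := by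
    have h := congrArg (rename (⇑(sT n j))) e5
    rw [map_mul, hrta, map_sub] at h
    exact h
  have e8 := rename_sT_comm hi hj hij f
  have hne : ((X ⟨i, Nat.lt_of_succ_lt hi⟩ - X ⟨i + 1, hi⟩)
      * (X ⟨j, Nat.lt_of_succ_lt hj⟩ - X ⟨j + 1, hj⟩) : MvPolynomial (Fin n) ℤ) ≠ 0 :=
    mul_ne_zero (X_sub_X_ne hi) (X_sub_X_ne hj)
  apply mul_left_cancel₀ hne
  linear_combination (X ⟨j, Nat.lt_of_succ_lt hj⟩ - X ⟨j + 1, hj⟩ : MvPolynomial (Fin n) ℤ) * e1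
    + e2 - e4 - e5
    - (X ⟨i, Nat.lt_of_succ_lt hi⟩ - X ⟨i + 1, hi⟩ : MvPolynomial (Fin n) ℤ) * e6 + e7 + e8

lemma rename_sT_braid (h : i + 2 < n) (f : MvPolynomial (Fin n) ℤ) :
    rename (⇑(sT n i)) (rename (⇑(sT n (i + 1))) (rename (⇑(sT n i)) f))
      = rename (⇑(sT n (i + 1))) (rename (⇑(sT n i)) (rename (⇑(sT n (i + 1))) f)) := by
  rw [rename_rename, rename_rename, rename_rename, rename_rename]
  have hfun : ((⇑(sT n i) ∘ ⇑(sT n (i + 1))) ∘ ⇑(sT n i))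
      = ((⇑(sT n (i + 1)) ∘ ⇑(sT n i)) ∘ ⇑(sT n (i + 1))) := by
    funext x
    have := congrArg (fun p : Equiv.Perm (Fin n) => p x) (sT_braid h)
    simpa [Equiv.Perm.mul_apply] using this
  rw [hfun]

lemma dd_braid (h : i + 2 < n) (f : MvPolynomial (Fin n) ℤ) :
    dd n i (dd n (i + 1) (dd n i f)) = dd n (i + 1) (dd n i (dd n (i + 1) f)) := by
  have hi : i + 1 < n := by omega
  have hj : i + 1 + 1 < n := h
  set a : MvPolynomial (Fin n) ℤ :=
    X ⟨i, Nat.lt_of_succ_lt hi⟩ - X ⟨i + 1, hi⟩ with ha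
  set b : MvPolynomial (Fin n) ℤ :=
    X ⟨i + 1, Nat.lt_of_succ_lt hj⟩ - X ⟨i + 1 + 1, hj⟩ with hb
  set c : MvPolynomial (Fin n) ℤ :=
    X ⟨i, Nat.lt_of_succ_lt hi⟩ - X ⟨i + 1 + 1, hj⟩ with hc
  -- rename images of the linear forms
  have hSa : rename (⇑(sT n i)) a = -a := by
    rw [ha, map_sub, rename_X, rename_X, sT_apply_fst hi, sT_apply_snd hi]; ring
  have hSb : rename (⇑(sT n i)) b = c := by
    rw [hb, hc, map_sub, rename_X, rename_X,
      show ((⟨i + 1, Nat.lt_of_succ_lt hj⟩ : Fin n)) = (⟨i + 1, hi⟩ : Fin n) from rfl,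
      sT_apply_snd hi, sT_apply_other hi _ (by simp <;> omega) (by simp <;> omega)]
  have hSc : rename (⇑(sT n i)) c = b := by
    rw [hb, hc, map_sub, rename_X, rename_X, sT_apply_fst hi,
      sT_apply_other hi _ (by simp <;> omega) (by simp <;> omega)]
  have hTa : rename (⇑(sT n (i + 1))) a = c := by
    rw [ha, hc, map_sub, rename_X, rename_X,
      sT_apply_other hj _ (by simp <;> omega) (by simp <;> omega),
      show ((⟨i + 1, hi⟩ : Fin n)) = (⟨i + 1, Nat.lt_of_succ_lt hj⟩ : Fin n) from rfl,
      sT_apply_fst hj]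
  have hTc : rename (⇑(sT n (i + 1))) c = a := by
    rw [ha, hc, map_sub, rename_X, rename_X,
      sT_apply_other hj _ (by simp <;> omega) (by simp <;> omega), sT_apply_snd hj]
  -- left-hand side chain
  have E1 := dd_spec hi f
  have E1inv := rename_dd hi f
  have E2 := dd_spec hj (dd n i f)
  have E3 := dd_spec hi (dd n (i + 1) (dd n i f))
  have E4 : c * rename (⇑(sT n (i + 1))) (dd n i f)
      = rename (⇑(sT n (i + 1))) f
        - rename (⇑(sT n (i + 1))) (rename (⇑(sT n i)) f) := by
    have hh := congrArg (rename (⇑(sT n (i + 1)))) E1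
    rw [map_mul, hTa, map_sub] at hh
    exact hh
  have E5 : c * rename (⇑(sT n i)) (dd n (i + 1) (dd n i f))
      = dd n i f - rename (⇑(sT n i)) (rename (⇑(sT n (i + 1))) (dd n i f)) := by
    have hh := congrArg (rename (⇑(sT n i))) E2
    rw [map_mul, hSb, map_sub, E1inv] at hh
    exact hh
  have E6 : b * rename (⇑(sT n i)) (rename (⇑(sT n (i + 1))) (dd n i f))
      = rename (⇑(sT n i)) (rename (⇑(sT n (i + 1))) f)
        - rename (⇑(sT n i)) (rename (⇑(sT n (i + 1))) (rename (⇑(sT n i)) f)) := by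
    have hh := congrArg (rename (⇑(sT n i))) E4
    rw [map_mul, hSc, map_sub] at hh
    exact hh
  -- right-hand side chain
  have F1 := dd_spec hj f
  have F1inv := rename_dd hj f
  have F2 := dd_spec hi (dd n (i + 1) f)
  have F3 := dd_spec hj (dd n i (dd n (i + 1) f))
  have F4 : c * rename (⇑(sT n i)) (dd n (i + 1) f)
      = rename (⇑(sT n i)) f - rename (⇑(sT n i)) (rename (⇑(sT n (i + 1))) f) := by
    have hh := congrArg (rename (⇑(sT n i))) F1
    rw [map_mul, hSb, map_sub] at hh
    exact hh
  have F5 : c * rename (⇑(sT n (i + 1))) (dd n i (dd n (i + 1) f))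
      = dd n (i + 1) f
        - rename (⇑(sT n (i + 1))) (rename (⇑(sT n i)) (dd n (i + 1) f)) := by
    have hh := congrArg (rename (⇑(sT n (i + 1)))) F2
    rw [map_mul, hTa, map_sub, F1inv] at hh
    exact hh
  have F6 : a * rename (⇑(sT n (i + 1))) (rename (⇑(sT n i)) (dd n (i + 1) f))
      = rename (⇑(sT n (i + 1))) (rename (⇑(sT n i)) f)
        - rename (⇑(sT n (i + 1))) (rename (⇑(sT n i)) (rename (⇑(sT n (i + 1))) f)) := by
    have hh := congrArg (rename (⇑(sT n (i + 1)))) F4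
    rw [map_mul, hTc, map_sub] at hh
    exact hh
  have G := rename_sT_braid h f
  have hne : a * b * c ≠ 0 :=
    mul_ne_zero (mul_ne_zero (X_sub_X_ne hi) (X_sub_X_ne hj)) (X_sub_X_ne_gen (Fin.ne_of_val_ne (by simp; omega)))
  have hc2 : a + b = c := by rw [ha, hb, hc]; ring
  apply mul_left_cancel₀ hne
  linear_combination (b * c) * E3 + c * E2 - b * E5 - E4 + E6 + E1
    - ((a * c) * F3 + c * F2 - a * F5 - F4 + F6 + F1) - G
    + (dd n i f - dd n (i + 1) f) * hc2

end DDAlgebra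

section Combinatorics

variable {n i j : ℕ}

lemma sT_inv : (sT n i)⁻¹ = sT n i := by
  rw [sT]; split
  · exact Equiv.swap_inv _ _
  · exact inv_one

lemma sT_val (hi : i + 1 < n) (x : Fin n) :
    ((sT n i x : Fin n) : ℕ)
      = if (x : ℕ) = i then i + 1 else if (x : ℕ) = i + 1 then i else x := by
  split_ifs with h1 h2
  · rw [show x = ⟨i, Nat.lt_of_succ_lt hi⟩ from Fin.ext h1, sT_apply_fst hi]
  · rw [show x = ⟨i + 1, hi⟩ from Fin.ext h2, sT_apply_snd hi]
  · rw [sT_apply_other hi x h1 h2]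

lemma sT_lt_sT_iff (hi : i + 1 < n) (u v : Fin n) (huv : u ≠ v)
    (h1 : ¬(u = ⟨i, Nat.lt_of_succ_lt hi⟩ ∧ v = ⟨i + 1, hi⟩))
    (h2 : ¬(u = ⟨i + 1, hi⟩ ∧ v = ⟨i, Nat.lt_of_succ_lt hi⟩)) :
    sT n i v < sT n i u ↔ v < u := by
  have hu := u.isLt
  have hv := v.isLt
  have huv' : (u : ℕ) ≠ (v : ℕ) := fun hh => huv (Fin.ext hh)
  have h1' : ¬((u : ℕ) = i ∧ (v : ℕ) = i + 1) := fun hh => h1 ⟨Fin.ext hh.1, Fin.ext hh.2⟩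
  have h2' : ¬((u : ℕ) = i + 1 ∧ (v : ℕ) = i) := fun hh => h2 ⟨Fin.ext hh.1, Fin.ext hh.2⟩
  simp only [Fin.lt_def, sT_val hi]
  split_ifs <;> omega

private lemma invLen_step_gen (s w : Equiv.Perm (Fin n)) {a b : Fin n} (hab : a < b)
    (hsa : s a = b) (hsb : s b = a)
    (hs : ∀ u v : Fin n, u ≠ v → ¬(u = a ∧ v = b) → ¬(u = b ∧ v = a) →
      (s v < s u ↔ v < u)) :
    (w⁻¹ a < w⁻¹ b → invLen (s * w) = invLen w + 1) ∧
    (w⁻¹ b < w⁻¹ a → invLen w = invLen (s * w) + 1) := by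
  classical
  have hwa : w (w⁻¹ a) = a := w.apply_symm_apply a
  have hwb : w (w⁻¹ b) = b := w.apply_symm_apply b
  have hmem : ∀ z1 z2 : Fin n, z1 < z2 → ¬(z1 = w⁻¹ a ∧ z2 = w⁻¹ b) →
      ¬(z1 = w⁻¹ b ∧ z2 = w⁻¹ a) → ((s * w) z2 < (s * w) z1 ↔ w z2 < w z1) := by
    intro z1 z2 hz hc1 hc2
    simp only [Equiv.Perm.mul_apply]
    refine hs (w z1) (w z2) (fun hh => (ne_of_lt hz) (w.injective hh)) ?_ ?_
    · rintro ⟨e1, e2⟩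
      exact hc1 ⟨by rw [← e1]; exact (w.symm_apply_apply _).symm,
        by rw [← e2]; exact (w.symm_apply_apply _).symm⟩
    · rintro ⟨e1, e2⟩
      exact hc2 ⟨by rw [← e1]; exact (w.symm_apply_apply _).symm,
        by rw [← e2]; exact (w.symm_apply_apply _).symm⟩
  constructor
  · intro hlt
    have hz0A : (w⁻¹ a, w⁻¹ b) ∉
        (Finset.univ.filter fun p : Fin n × Fin n => p.1 < p.2 ∧ w p.2 < w p.1) := by
      simp only [Finset.mem_filter, Finset.mem_univ, true_and, hwa, hwb, not_and]
      intro _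
      exact not_lt.mpr hab.le
    have hz0B : (w⁻¹ a, w⁻¹ b) ∈
        (Finset.univ.filter fun p : Fin n × Fin n => p.1 < p.2 ∧ (s * w) p.2 < (s * w) p.1) := by
      rw [Finset.mem_filter]
      simp only [Finset.mem_filter, Finset.mem_univ, true_and, Equiv.Perm.mul_apply,
        hwa, hwb, hsa, hsb]
      exact ⟨hlt, hab⟩
    have hBA : (Finset.univ.filter fun p : Fin n × Fin n =>
          p.1 < p.2 ∧ (s * w) p.2 < (s * w) p.1)
        = insert (w⁻¹ a, w⁻¹ b)
          (Finset.univ.filter fun p : Fin n × Fin n => p.1 < p.2 ∧ w p.2 < w p.1) := by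
      ext z
      obtain ⟨z1, z2⟩ := z
      simp only [Finset.mem_insert, Finset.mem_filter, Finset.mem_univ, true_and,
        Prod.mk.injEq]
      by_cases hz : z1 < z2
      · by_cases hc1 : z1 = w⁻¹ a ∧ z2 = w⁻¹ b
        · obtain ⟨rfl, rfl⟩ := hc1
          simp only [Equiv.Perm.mul_apply, hwa, hwb, hsa, hsb]
          tauto
        · by_cases hc2 : z1 = w⁻¹ b ∧ z2 = w⁻¹ a
          · obtain ⟨rfl, rfl⟩ := hc2
            exact absurd (hz.trans hlt) (lt_irrefl _)
          · have hiff := hmem z1 z2 hz hc1 hc2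
            constructor
            · rintro ⟨-, hh⟩; exact Or.inr ⟨hz, hiff.mp hh⟩
            · rintro (hpair | ⟨-, hh⟩)
              · exact absurd hpair hc1
              · exact ⟨hz, hiff.mpr hh⟩
      · constructor
        · rintro ⟨hzz, -⟩; exact absurd hzz hz
        · rintro (⟨rfl, rfl⟩ | ⟨hzz, -⟩)
          · exact absurd hlt hz
          · exact absurd hzz hz
    rw [invLen, invLen, hBA, Finset.card_insert_of_notMem hz0A]
  · intro hgt
    have hz0A : (w⁻¹ b, w⁻¹ a) ∈
        (Finset.univ.filter fun p : Fin n × Fin n => p.1 < p.2 ∧ w p.2 < w p.1) := by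
      simp only [Finset.mem_filter, Finset.mem_univ, true_and, hwa, hwb]
      exact ⟨hgt, hab⟩
    have hz0B : (w⁻¹ b, w⁻¹ a) ∉
        (Finset.univ.filter fun p : Fin n × Fin n =>
          p.1 < p.2 ∧ (s * w) p.2 < (s * w) p.1) := by
      rw [Finset.mem_filter]
      simp only [Finset.mem_filter, Finset.mem_univ, true_and, Equiv.Perm.mul_apply,
        hwa, hwb, hsa, hsb, not_and]
      intro _
      exact not_lt.mpr hab.le
    have hAB : (Finset.univ.filter fun p : Fin n × Fin n => p.1 < p.2 ∧ w p.2 < w p.1)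
        = insert (w⁻¹ b, w⁻¹ a)
          (Finset.univ.filter fun p : Fin n × Fin n =>
            p.1 < p.2 ∧ (s * w) p.2 < (s * w) p.1) := by
      ext z
      obtain ⟨z1, z2⟩ := z
      simp only [Finset.mem_insert, Finset.mem_filter, Finset.mem_univ, true_and,
        Prod.mk.injEq]
      by_cases hz : z1 < z2
      · by_cases hc2 : z1 = w⁻¹ b ∧ z2 = w⁻¹ a
        · obtain ⟨rfl, rfl⟩ := hc2
          simp only [hwa, hwb]
          tauto
        · by_cases hc1 : z1 = w⁻¹ a ∧ z2 = w⁻¹ b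
          · obtain ⟨rfl, rfl⟩ := hc1
            exact absurd (hz.trans hgt) (lt_irrefl _)
          · have hiff := hmem z1 z2 hz hc1 hc2
            constructor
            · rintro ⟨-, hh⟩; exact Or.inr ⟨hz, hiff.mpr hh⟩
            · rintro (hpair | ⟨-, hh⟩)
              · exact absurd hpair hc2
              · exact ⟨hz, hiff.mp hh⟩
      · constructor
        · rintro ⟨hzz, -⟩; exact absurd hzz hz
        · rintro (⟨rfl, rfl⟩ | ⟨hzz, -⟩)
          · exact absurd hgt hz
          · exact absurd hzz hz
    rw [invLen, invLen, hAB, Finset.card_insert_of_notMem hz0B]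

lemma invLen_step_sT (hi : i + 1 < n) (w : Equiv.Perm (Fin n)) :
    (w⁻¹ ⟨i, Nat.lt_of_succ_lt hi⟩ < w⁻¹ ⟨i + 1, hi⟩ →
      invLen (sT n i * w) = invLen w + 1) ∧
    (w⁻¹ ⟨i + 1, hi⟩ < w⁻¹ ⟨i, Nat.lt_of_succ_lt hi⟩ →
      invLen w = invLen (sT n i * w) + 1) :=
  invLen_step_gen (sT n i) w (by simp [Fin.lt_def]) (sT_apply_fst hi) (sT_apply_snd hi)
    (sT_lt_sT_iff hi)

lemma inv_ne (hi : i + 1 < n) (w : Equiv.Perm (Fin n)) :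
    w⁻¹ (⟨i, Nat.lt_of_succ_lt hi⟩ : Fin n) ≠ w⁻¹ ⟨i + 1, hi⟩ := by
  intro hh
  have := w⁻¹.injective hh
  simp [Fin.ext_iff] at this

lemma invLen_dichotomy (hi : i + 1 < n) (w : Equiv.Perm (Fin n)) :
    invLen (sT n i * w) = invLen w + 1 ∨ invLen w = invLen (sT n i * w) + 1 := by
  rcases lt_or_gt_of_ne (inv_ne hi w) with h | h
  · exact Or.inl ((invLen_step_sT hi w).1 h)
  · exact Or.inr ((invLen_step_sT hi w).2 h)

lemma descent_of_le (hi : i + 1 < n) (w : Equiv.Perm (Fin n))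
    (h : invLen (sT n i * w) ≤ invLen w) :
    w⁻¹ (⟨i + 1, hi⟩ : Fin n) < w⁻¹ ⟨i, Nat.lt_of_succ_lt hi⟩
      ∧ invLen w = invLen (sT n i * w) + 1 := by
  rcases lt_or_gt_of_ne (inv_ne hi w) with hlt | hgt
  · have := (invLen_step_sT hi w).1 hlt
    omega
  · exact ⟨hgt, (invLen_step_sT hi w).2 hgt⟩

lemma invLen_one : invLen (1 : Equiv.Perm (Fin n)) = 0 := by
  rw [invLen, Finset.card_eq_zero, Finset.filter_eq_empty_iff]
  rintro p -
  rintro ⟨h1, h2⟩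
  simp only [Equiv.Perm.one_apply] at h2
  exact lt_asymm h1 h2

lemma wordProd_nil : wordProd n [] = 1 := rfl

lemma wordProd_cons (i : ℕ) (t : List ℕ) :
    wordProd n (i :: t) = sT n i * wordProd n t := by
  simp [wordProd]

lemma invLen_wordProd_le (l : List ℕ) : invLen (wordProd n l) ≤ l.length := by
  induction l with
  | nil => rw [wordProd_nil, invLen_one]; exact Nat.zero_le _
  | cons i t ih =>
      rw [wordProd_cons]
      by_cases hi : i + 1 < n
      · rcases invLen_dichotomy hi (wordProd n t) with h | h <;>
          simp only [List.length_cons] <;> omega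
      · rw [show sT n i = 1 from dif_neg hi, one_mul]
        simp only [List.length_cons]
        omega

lemma exists_descent (w : Equiv.Perm (Fin n)) (hw : w ≠ 1) :
    ∃ i, ∃ hi : i + 1 < n,
      w⁻¹ (⟨i + 1, hi⟩ : Fin n) < w⁻¹ ⟨i, Nat.lt_of_succ_lt hi⟩ := by
  by_contra hcon
  push_neg at hcon
  have hconle : ∀ (i : ℕ) (hi : i + 1 < n),
      w⁻¹ (⟨i, Nat.lt_of_succ_lt hi⟩ : Fin n) < w⁻¹ ⟨i + 1, hi⟩ := by
    intro i hi
    exact lt_of_le_of_ne (hcon i hi) (inv_ne hi w)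
  have hmono : StrictMono (⇑(w⁻¹ : Equiv.Perm (Fin n))) := by
    have key : ∀ d : ℕ, ∀ k l : Fin n, (l : ℕ) = (k : ℕ) + d + 1 → w⁻¹ k < w⁻¹ l := by
      intro d
      induction d with
      | zero =>
          intro k l hkl
          have hlt : (k : ℕ) + 1 < n := by have := l.isLt; omega
          have hl : l = ⟨(k : ℕ) + 1, hlt⟩ := Fin.ext (by simp <;> omega)
          have hthis := hconle (k : ℕ) hlt
          rw [← hl] at hthis
          exact hthis
      | succ d ihd =>
          intro k l hkl
          have hmidlt : (k : ℕ) + d + 1 < n := by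
            have := l.isLt; omega
          have h1 : w⁻¹ k < w⁻¹ ⟨(k : ℕ) + d + 1, hmidlt⟩ := ihd k _ rfl
          have h2 : w⁻¹ (⟨(k : ℕ) + d + 1, hmidlt⟩ : Fin n) < w⁻¹ l := by
            have hlt2 : (k : ℕ) + d + 1 + 1 < n := by
              have := l.isLt; omega
            have hl : l = ⟨(k : ℕ) + d + 1 + 1, hlt2⟩ := Fin.ext (by simp <;> omega)
            have hthis := hconle ((k : ℕ) + d + 1) hlt2
            rw [← hl] at hthis
            exact hthis
          exact h1.trans h2
    intro k l hkl
    have : (l : ℕ) = (k : ℕ) + ((l : ℕ) - (k : ℕ) - 1) + 1 := by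
      have := (Fin.lt_def).mp hkl; omega
    exact key _ k l this
  haveI : WellFoundedLT (Fin n) := Finite.to_wellFoundedLT
  have hmonow : StrictMono (⇑w) := by
    intro x y hxy
    rcases lt_trichotomy (w x) (w y) with h | h | h
    · exact h
    · exact absurd (w.injective h) (ne_of_lt hxy)
    · have hh := hmono h
      rw [show ∀ z, w⁻¹ (w z) = z from fun z => w.symm_apply_apply z,
        show ∀ z, w⁻¹ (w z) = z from fun z => w.symm_apply_apply z] at hh
      exact absurd hxy (not_lt.mpr hh.le)
  apply hw
  apply Equiv.ext
  intro x
  have h3 : x ≤ w⁻¹ x := hmono.le_apply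
  have h4 : w x ≤ w (w⁻¹ x) := hmonow.monotone h3
  rw [show ∀ z, w (w⁻¹ z) = z from fun z => w.apply_symm_apply z] at h4
  have h5 : x ≤ w x := hmonow.le_apply
  simp only [Equiv.Perm.one_apply]
  exact le_antisymm h4 h5

lemma ddList_cons (i : ℕ) (t : List ℕ) (f : MvPolynomial (Fin n) ℤ) :
    ddList n (i :: t) f = dd n i (ddList n t f) := rfl

lemma exists_reduced_word (w : Equiv.Perm (Fin n)) :
    ∃ l : List ℕ, (∀ j ∈ l, j + 1 < n) ∧ wordProd n l = w ∧ l.length = invLen w := by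
  suffices H : ∀ k : ℕ, ∀ w : Equiv.Perm (Fin n), invLen w = k →
      ∃ l : List ℕ, (∀ j ∈ l, j + 1 < n) ∧ wordProd n l = w ∧ l.length = invLen w from
    H (invLen w) w rfl
  intro k
  induction k using Nat.strong_induction_on with
  | _ k ih =>
    intro w hk
    rcases eq_or_ne w 1 with rfl | hne
    · exact ⟨[], by simp, wordProd_nil, by rw [invLen_one]; rfl⟩
    · obtain ⟨i, hi, hdesc⟩ := exists_descent w hne
      have hstep := (invLen_step_sT hi w).2 hdesc
      obtain ⟨l, hval, hprod, hlen⟩ := ih (invLen (sT n i * w)) (by omega) (sT n i * w) rfl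
      refine ⟨i :: l, ?_, ?_, ?_⟩
      · intro j hj
        rcases List.mem_cons.mp hj with rfl | hj
        · exact hi
        · exact hval j hj
      · rw [wordProd_cons, hprod, ← mul_assoc, sT_mul_self, one_mul]
      · simp only [List.length_cons, hlen]; omega

lemma inv_mul_sT (w : Equiv.Perm (Fin n)) (x : Fin n) :
    (sT n i * w)⁻¹ x = w⁻¹ (sT n i x) := by
  rw [mul_inv_rev, Equiv.Perm.mul_apply, sT_inv]

lemma main_induction (n : ℕ) : ∀ m : ℕ,
    (∀ l l' : List ℕ, (∀ j ∈ l, j + 1 < n) → (∀ j ∈ l', j + 1 < n) →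
      l.length = m → l'.length = m → wordProd n l = wordProd n l' →
      invLen (wordProd n l) = m → ∀ f, ddList n l f = ddList n l' f) ∧
    (∀ l : List ℕ, (∀ j ∈ l, j + 1 < n) → l.length = m →
      invLen (wordProd n l) < m → ∀ f, ddList n l f = 0) := by
  intro m
  induction m using Nat.strong_induction_on with
  | _ m ih =>
  have helper : ∀ (i i' : ℕ) (t t' : List ℕ), i < i' →
      (∀ j ∈ i :: t, j + 1 < n) → (∀ j ∈ i' :: t', j + 1 < n) →
      (i :: t).length = m → (i' :: t').length = m →
      wordProd n (i :: t) = wordProd n (i' :: t') →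
      invLen (wordProd n (i :: t)) = m →
      ∀ f, ddList n (i :: t) f = ddList n (i' :: t') f := by
    intro i i' t t' hii' hv hv' hl hl' hprod hred f
    have hi : i + 1 < n := hv i (List.mem_cons_self (a := i) (l := t))
    have hi' : i' + 1 < n := hv' i' (List.mem_cons_self (a := i') (l := t'))
    have hvt : ∀ j ∈ t, j + 1 < n := fun j hj => hv j (List.mem_cons_of_mem i hj)
    have hvt' : ∀ j ∈ t', j + 1 < n := fun j hj => hv' j (List.mem_cons_of_mem i' hj)
    obtain ⟨w, hw⟩ : ∃ w, wordProd n (i :: t) = w := ⟨_, rfl⟩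
    have hprod' : wordProd n (i' :: t') = w := hprod ▸ hw
    have hred' : invLen w = m := hw ▸ hred
    have ht : t.length + 1 = m := by simpa using hl
    have ht' : t'.length + 1 = m := by simpa using hl'
    have hwt : wordProd n t = sT n i * w := by
      rw [← hw, wordProd_cons, ← mul_assoc, sT_mul_self, one_mul]
    have hwt' : wordProd n t' = sT n i' * w := by
      rw [← hprod', wordProd_cons, ← mul_assoc, sT_mul_self, one_mul]
    have hle : invLen (wordProd n t) ≤ t.length := invLen_wordProd_le t
    have hle' : invLen (wordProd n t') ≤ t'.length := invLen_wordProd_le t'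
    have h1 : invLen (sT n i * w) ≤ invLen w := by
      rw [← hwt, hred']; omega
    have h1' : invLen (sT n i' * w) ≤ invLen w := by
      rw [← hwt', hred']; omega
    obtain ⟨hdesc_i, hstep_i⟩ := descent_of_le hi w h1
    obtain ⟨hdesc_i', hstep_i'⟩ := descent_of_le hi' w h1'
    have hredt : invLen (wordProd n t) = t.length := by rw [hwt]; omega
    have hredt' : invLen (wordProd n t') = t'.length := by rw [hwt']; omega
    rcases Nat.lt_or_ge (i + 1) i' with hfar | hnear
    · -- commuting case
      have e1 : (sT n i * w)⁻¹ (⟨i' + 1, hi'⟩ : Fin n) = w⁻¹ ⟨i' + 1, hi'⟩ := by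
        rw [inv_mul_sT, sT_apply_other hi _ (by simp <;> omega) (by simp <;> omega)]
      have e2 : (sT n i * w)⁻¹ (⟨i', Nat.lt_of_succ_lt hi'⟩ : Fin n)
          = w⁻¹ ⟨i', Nat.lt_of_succ_lt hi'⟩ := by
        rw [inv_mul_sT, sT_apply_other hi _ (by simp <;> omega) (by simp <;> omega)]
      have hstep2 : invLen (sT n i * w) = invLen (sT n i' * (sT n i * w)) + 1 :=
        (invLen_step_sT hi' (sT n i * w)).2 (by rw [e1, e2]; exact hdesc_i')
      obtain ⟨r, hrv, hrp, hrl⟩ := exists_reduced_word (sT n i' * (sT n i * w))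
      have hc := sT_comm hi hi' hfar
      have hp1 : wordProd n (i' :: r) = sT n i * w := by
        rw [wordProd_cons, hrp, ← mul_assoc, sT_mul_self, one_mul]
      have hp2 : wordProd n (i :: r) = sT n i' * w := by
        rw [wordProd_cons, hrp, ← mul_assoc, hc, mul_assoc,
          ← mul_assoc (sT n i) (sT n i) w, sT_mul_self, one_mul]
      have hv1 : ∀ j ∈ i' :: r, j + 1 < n := by
        intro j hj
        rcases List.mem_cons.mp hj with rfl | hj
        · exact hi'
        · exact hrv j hj
      have hv2 : ∀ j ∈ i :: r, j + 1 < n := by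
        intro j hj
        rcases List.mem_cons.mp hj with rfl | hj
        · exact hi
        · exact hrv j hj
      have hA1 := (ih t.length (by omega)).1 t (i' :: r) hvt hv1 rfl
        (by simp only [List.length_cons]; omega)
        (by rw [hwt, hp1]) hredt f
      have hA2 := (ih t'.length (by omega)).1 t' (i :: r) hvt' hv2 rfl
        (by simp only [List.length_cons]; omega)
        (by rw [hwt', hp2]) hredt' f
      rw [ddList_cons, ddList_cons, hA1, hA2, ddList_cons, ddList_cons]
      exact dd_comm hi hi' hfar (ddList n r f)
    · -- braid case : i' = i + 1
      have hii2 : i' = i + 1 := by omega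
      subst hii2
      have hd2 : (sT n i * w)⁻¹ (⟨i + 1 + 1, hi'⟩ : Fin n)
          < (sT n i * w)⁻¹ ⟨i + 1, Nat.lt_of_succ_lt hi'⟩ := by
        rw [inv_mul_sT, inv_mul_sT,
          sT_apply_other hi _ (by simp <;> omega) (by simp <;> omega),
          show sT n i (⟨i + 1, Nat.lt_of_succ_lt hi'⟩ : Fin n)
            = ⟨i, Nat.lt_of_succ_lt hi⟩ from sT_apply_snd hi]
        exact hdesc_i'.trans hdesc_i
      have hstep2 : invLen (sT n i * w)
          = invLen (sT n (i + 1) * (sT n i * w)) + 1 :=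
        (invLen_step_sT hi' (sT n i * w)).2 hd2
      have hd3 : (sT n (i + 1) * (sT n i * w))⁻¹ (⟨i + 1, hi⟩ : Fin n)
          < (sT n (i + 1) * (sT n i * w))⁻¹ ⟨i, Nat.lt_of_succ_lt hi⟩ := by
        rw [inv_mul_sT, inv_mul_sT, inv_mul_sT, inv_mul_sT,
          show sT n (i + 1) (⟨i + 1, hi⟩ : Fin n) = ⟨i + 1 + 1, hi'⟩ from sT_apply_fst hi',
          sT_apply_other hi _ (by simp <;> omega) (by simp <;> omega),
          sT_apply_other hi' _ (by simp <;> omega) (by simp <;> omega),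
          show sT n i (⟨i, Nat.lt_of_succ_lt hi⟩ : Fin n) = ⟨i + 1, hi⟩ from sT_apply_fst hi]
        exact hdesc_i'
      have hstep3 : invLen (sT n (i + 1) * (sT n i * w))
          = invLen (sT n i * (sT n (i + 1) * (sT n i * w))) + 1 :=
        (invLen_step_sT hi (sT n (i + 1) * (sT n i * w))).2 hd3
      obtain ⟨r, hrv, hrp, hrl⟩ :=
        exists_reduced_word (sT n i * (sT n (i + 1) * (sT n i * w)))
      have key1 : sT n (i + 1) * (sT n i * (sT n i * (sT n (i + 1) * (sT n i * w))))
          = sT n i * w := by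
        rw [← mul_assoc (sT n i) (sT n i), sT_mul_self, one_mul,
          ← mul_assoc (sT n (i + 1)) (sT n (i + 1)), sT_mul_self, one_mul]
      have key2 : sT n i * (sT n (i + 1) * (sT n i * (sT n (i + 1) * (sT n i * w))))
          = sT n (i + 1) * w := by
        have hb := sT_braid (n := n) (i := i) hi'
        simp only [← mul_assoc]
        rw [show sT n i * sT n (i + 1) * sT n i * sT n (i + 1) * sT n i * w
            = (sT n i * sT n (i + 1) * sT n i) * sT n (i + 1) * sT n i * w from by
              simp only [mul_assoc], hb]
        rw [show sT n (i + 1) * sT n i * sT n (i + 1) * sT n (i + 1) * sT n i * w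
            = sT n (i + 1) * sT n i * (sT n (i + 1) * sT n (i + 1)) * sT n i * w from by
              simp only [mul_assoc], sT_mul_self, mul_one]
        rw [show sT n (i + 1) * sT n i * sT n i * w
            = sT n (i + 1) * (sT n i * sT n i) * w from by simp only [mul_assoc],
          sT_mul_self, mul_one]
      have hp1 : wordProd n ((i + 1) :: i :: r) = sT n i * w := by
        rw [wordProd_cons, wordProd_cons, hrp]
        exact key1
      have hp2 : wordProd n (i :: (i + 1) :: r) = sT n (i + 1) * w := by
        rw [wordProd_cons, wordProd_cons, hrp]
        exact key2
      have hv1 : ∀ j ∈ (i + 1) :: i :: r, j + 1 < n := by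
        intro j hj
        rcases List.mem_cons.mp hj with rfl | hj
        · exact hi'
        · rcases List.mem_cons.mp hj with rfl | hj
          · exact hi
          · exact hrv j hj
      have hv2 : ∀ j ∈ i :: (i + 1) :: r, j + 1 < n := by
        intro j hj
        rcases List.mem_cons.mp hj with rfl | hj
        · exact hi
        · rcases List.mem_cons.mp hj with rfl | hj
          · exact hi'
          · exact hrv j hj
      have hA1 := (ih t.length (by omega)).1 t ((i + 1) :: i :: r) hvt hv1 rfl
        (by simp only [List.length_cons]; omega)
        (by rw [hwt, hp1]) hredt f
      have hA2 := (ih t'.length (by omega)).1 t' (i :: (i + 1) :: r) hvt' hv2 rfl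
        (by simp only [List.length_cons]; omega)
        (by rw [hwt', hp2]) hredt' f
      rw [ddList_cons, ddList_cons, hA1, hA2, ddList_cons, ddList_cons,
        ddList_cons, ddList_cons]
      exact dd_braid hi' (ddList n r f)
  constructor
  · -- part A
    intro l l' hv hv' hl hl' hprod hred f
    cases l with
    | nil =>
        cases l' with
        | nil => rfl
        | cons i' t' => simp at hl hl'; omega
    | cons i t =>
        cases l' with
        | nil => simp at hl hl'; omega
        | cons i' t' =>
            rcases Nat.lt_trichotomy i i' with h | h | h
            · exact helper i i' t t' h hv hv' hl hl' hprod hred f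
            · subst h
              have hi : i + 1 < n := hv i (List.mem_cons_self (a := i) (l := t))
              have hvt : ∀ j ∈ t, j + 1 < n := fun j hj => hv j (List.mem_cons_of_mem i hj)
              have hvt' : ∀ j ∈ t', j + 1 < n := fun j hj => hv' j (List.mem_cons_of_mem i hj)
              obtain ⟨w, hw⟩ : ∃ w, wordProd n (i :: t) = w := ⟨_, rfl⟩
              have hprod' : wordProd n (i :: t') = w := hprod ▸ hw
              have hred' : invLen w = m := hw ▸ hred
              have ht : t.length + 1 = m := by simpa using hl
              have ht' : t'.length + 1 = m := by simpa using hl'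
              have hwt : wordProd n t = sT n i * w := by
                rw [← hw, wordProd_cons, ← mul_assoc, sT_mul_self, one_mul]
              have hwt' : wordProd n t' = sT n i * w := by
                rw [← hprod', wordProd_cons, ← mul_assoc, sT_mul_self, one_mul]
              have hle : invLen (wordProd n t) ≤ t.length := invLen_wordProd_le t
              have h1 : invLen (sT n i * w) ≤ invLen w := by
                rw [← hwt, hred']; omega
              obtain ⟨hdesc_i, hstep_i⟩ := descent_of_le hi w h1
              have hredt : invLen (wordProd n t) = t.length := by rw [hwt]; omega
              have hAA := (ih t.length (by omega)).1 t t' hvt hvt' rfl (by omega)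
                (by rw [hwt, hwt']) hredt f
              rw [ddList_cons, ddList_cons, hAA]
            · exact (helper i' i t' t h hv' hv hl' hl hprod.symm
                (by rw [← hprod]; exact hred) f).symm
  · -- part B
    intro l hv hl hlt f
    cases l with
    | nil => simp at hl; omega
    | cons i t =>
        have hi : i + 1 < n := hv i (List.mem_cons_self (a := i) (l := t))
        have hvt : ∀ j ∈ t, j + 1 < n := fun j hj => hv j (List.mem_cons_of_mem i hj)
        have ht : t.length + 1 = m := by simpa using hl
        have hle : invLen (wordProd n t) ≤ t.length := invLen_wordProd_le t
        rcases Nat.lt_or_ge (invLen (wordProd n t)) t.length with hcase | hcase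
        · have hB := (ih t.length (by omega)).2 t hvt rfl hcase f
          rw [ddList_cons, hB, dd_zero hi]
        · have hredt : invLen (wordProd n t) = t.length := le_antisymm hle hcase
          have hlt2 : invLen (sT n i * wordProd n t) ≤ invLen (wordProd n t) := by
            have : invLen (wordProd n (i :: t)) < m := hlt
            rw [wordProd_cons] at this
            omega
          obtain ⟨hdesc, hstep⟩ := descent_of_le hi (wordProd n t) hlt2
          obtain ⟨r, hrv, hrp, hrl⟩ := exists_reduced_word (sT n i * wordProd n t)
          have hp1 : wordProd n (i :: r) = wordProd n t := by
            rw [wordProd_cons, hrp, ← mul_assoc, sT_mul_self, one_mul]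
          have hv1 : ∀ j ∈ i :: r, j + 1 < n := by
            intro j hj
            rcases List.mem_cons.mp hj with rfl | hj
            · exact hi
            · exact hrv j hj
          have hAA := (ih t.length (by omega)).1 t (i :: r) hvt hv1 rfl
            (by simp only [List.length_cons]; omega) (by rw [hp1]) hredt f
          rw [ddList_cons, hAA, ddList_cons, dd_dd hi]

end Combinatorics

/-- if a word `(i_1,…,i_m)` in `{1,…,n-1}` is not reduced, i.e.
`ℓ(s_{i_1}⋯s_{i_m}) < m`, then `∂_{i_1} ∘ ⋯ ∘ ∂_{i_m} = 0`.  In particular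
`∂_i ∘ ∂_i = 0` for every `i`. -/
theorem stmt2 (n : ℕ) :
    (∀ l : List ℕ, (∀ i ∈ l, i + 1 < n) → invLen (wordProd n l) < l.length →
      ∀ f : MvPolynomial (Fin n) ℤ, ddList n l f = 0) ∧
    (∀ i : ℕ, i + 1 < n → ∀ f : MvPolynomial (Fin n) ℤ, dd n i (dd n i f) = 0) := by
  constructor
  · intro l hv hlt f
    exact (main_induction n l.length).2 l hv rfl hlt f
  · intro i hi f
    exact dd_dd hi f
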